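/- Let A ⊆ B ⊆ ℝⁿ, let u : A → ℝᵐ and v : B → ℝᵐ be 1-Lipschitz maps, let δ ≥ 0 satisfy ‖u(x) − v(x)‖ ≤ δ for all x ∈ A, and let D ≥ 0 satisfy ‖v(x) − v(y)‖ ≤ D for all x ∈ A and y ∈ B. Then there exists a 1-Lipschitz map ũ : B → ℝᵐ with ũ(x) = u(x) for all x ∈ A and ‖v(x) − ũ(x)‖ ≤ √(δ² + 2δD) for all x ∈ B. -/

import Mathlib

set_option maxHeartbeats 1000000

open Finset Filter

variable {E F : Type*} [NormedAddCommGroup E] [InnerProductSpace ℝ E]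
  [NormedAddCommGroup F] [InnerProductSpace ℝ F] [FiniteDimensional ℝ F]

local notation "⟪" x ", " y "⟫" => @inner ℝ _ _ x y

theorem kirszbraun_finset (T : Finset E) (f : E → F)
    (hf : ∀ s ∈ T, ∀ t ∈ T, ‖f s - f t‖ ≤ ‖s - t‖) (z : E) :
    ∃ y : F, ∀ t ∈ T, ‖y - f t‖ ≤ ‖z - t‖ := by
  classical
  by_cases hzT : z ∈ T
  · exact ⟨f z, fun t ht => hf z hzT t ht⟩
  rcases T.eq_empty_or_nonempty with rfl | hT
  · exact ⟨0, by simp⟩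
  have hzt : ∀ t ∈ T, 0 < ‖z - t‖ := by
    intro t ht
    rw [norm_pos_iff, sub_ne_zero]
    rintro rfl; exact hzT ht
  set g : F → ℝ := fun y => T.sup' hT fun t => ‖y - f t‖ / ‖z - t‖ with hg
  have hg_cont : Continuous g :=
    Continuous.finset_sup'_apply hT fun t _ =>
      ((continuous_id.sub continuous_const).norm).div_const _
  have hg_coer : Tendsto g (cocompact F) atTop := by
    obtain ⟨t₀, ht₀⟩ := hT
    have h1 : Tendsto (fun y : F => ‖y - f t₀‖ / ‖z - t₀‖) (cocompact F) atTop := by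
      apply Tendsto.atTop_div_const (hzt t₀ ht₀)
      have := tendsto_dist_right_cocompact_atTop (f t₀)
      simpa [dist_eq_norm] using this
    refine tendsto_atTop_mono (fun y => ?_) h1
    exact Finset.le_sup' (fun t => ‖y - f t‖ / ‖z - t‖) ht₀
  obtain ⟨y₀, hy₀⟩ := hg_cont.exists_forall_le hg_coer
  set lam : ℝ := g y₀ with hlam
  have hle : ∀ t ∈ T, ‖y₀ - f t‖ ≤ lam * ‖z - t‖ := by
    intro t ht
    have h : ‖y₀ - f t‖ / ‖z - t‖ ≤ lam := Finset.le_sup' (fun t => ‖y₀ - f t‖ / ‖z - t‖) ht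
    rwa [div_le_iff₀ (hzt t ht)] at h
  by_cases hlam1 : lam ≤ 1
  · exact ⟨y₀, fun t ht => (hle t ht).trans (by nlinarith [hzt t ht, (hzt t ht).le])⟩
  push_neg at hlam1
  exfalso
  set I : Finset E := T.filter fun t => ‖y₀ - f t‖ = lam * ‖z - t‖ with hI
  have hIne : I.Nonempty := by
    obtain ⟨t₁, ht₁, heq⟩ := T.exists_mem_eq_sup' hT fun t => ‖y₀ - f t‖ / ‖z - t‖
    exact ⟨t₁, Finset.mem_filter.2 ⟨ht₁, by
      have h2 : lam = ‖y₀ - f t₁‖ / ‖z - t₁‖ := heq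
      rw [eq_div_iff (hzt t₁ ht₁).ne'] at h2
      rw [← h2, mul_comm]⟩⟩
  have hIT : ∀ t ∈ I, t ∈ T := fun t ht => (Finset.mem_filter.1 ht).1
  have hmem : y₀ ∈ convexHull ℝ (f '' (I : Set E)) := by
    by_contra hy₀C
    have hfin : (f '' (I : Set E)).Finite := (I.finite_toSet.image f)
    obtain ⟨φ, c, hφy, hφb⟩ := geometric_hahn_banach_point_closed
      (convex_convexHull ℝ _) (hfin.isClosed_convexHull (𝕜 := ℝ)) hy₀C
    set d : F := (InnerProductSpace.toDual ℝ F).symm φ with hd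
    have hdinner : ∀ w : F, ⟪d, w⟫ = φ w := fun w => InnerProductSpace.toDual_symm_apply
    set η : ℝ := c - φ y₀ with hη
    have hηpos : 0 < η := sub_pos.2 hφy
    have hact : ∀ t ∈ I, ⟪d, y₀ - f t⟫ < -η := by
      intro t ht
      have h1 : c < φ (f t) := hφb _ (subset_convexHull ℝ _ ⟨t, ht, rfl⟩)
      rw [hdinner, map_sub]
      simp only [hη]; linarith
    have hdne : d ≠ 0 := by
      intro h0
      obtain ⟨t, ht⟩ := hIne
      have := hact t ht
      rw [h0, inner_zero_left] at this
      linarith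
    have hdpos : (0:ℝ) < ‖d‖ := norm_pos_iff.2 hdne
    -- choose ε
    set β : E → ℝ := fun t => if t ∈ I then η / ‖d‖ ^ 2 else (lam * ‖z - t‖ - ‖y₀ - f t‖) / ‖d‖
      with hβ
    have hβpos : ∀ t ∈ T, 0 < β t := by
      intro t ht
      by_cases htI : t ∈ I
      · simp only [hβ, if_pos htI]
        positivity
      · simp only [hβ, if_neg htI]
        apply div_pos _ hdpos
        have hne : ‖y₀ - f t‖ ≠ lam * ‖z - t‖ := by
          intro h; exact htI (Finset.mem_filter.2 ⟨ht, h⟩)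
        have := hle t ht
        cases this.lt_or_eq with
        | inl h => linarith
        | inr h => exact absurd h hne
    set ε : ℝ := (T.inf' hT β) / 2 with hε
    have hinfpos : 0 < T.inf' hT β := by
      obtain ⟨t₂, ht₂, h2⟩ := T.exists_mem_eq_inf' hT β
      rw [h2]; exact hβpos t₂ ht₂
    have hεpos : 0 < ε := by positivity
    have hεlt : ∀ t ∈ T, ε < β t := fun t ht =>
      lt_of_lt_of_le (by linarith) (Finset.inf'_le β ht)
    have hgoal : g (y₀ + ε • d) < lam := by
      rw [hg]
      rw [Finset.sup'_lt_iff]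
      intro t ht
      rw [div_lt_iff₀ (hzt t ht)]
      by_cases htI : t ∈ I
      · -- active: compare squares
        have hib : ⟪d, y₀ - f t⟫ < -η := hact t htI
        have hεd : ε * ‖d‖ ^ 2 < η := by
          have := hεlt t ht
          simp only [hβ, if_pos htI] at this
          rw [lt_div_iff₀ (by positivity)] at this
          linarith
        have hsq : ‖y₀ + ε • d - f t‖ ^ 2 < (lam * ‖z - t‖) ^ 2 := by
          have hexp : ‖y₀ + ε • d - f t‖ ^ 2
              = ‖y₀ - f t‖ ^ 2 + 2 * (ε * ⟪d, y₀ - f t⟫) + ε ^ 2 * ‖d‖ ^ 2 := by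
            have : y₀ + ε • d - f t = (y₀ - f t) + ε • d := by abel
            rw [this, @norm_add_sq_real, real_inner_smul_right, norm_smul]
            have : ⟪y₀ - f t, d⟫ = ⟪d, y₀ - f t⟫ := real_inner_comm _ _
            rw [this]
            simp [abs_of_pos hεpos, mul_pow]
            try ring
          have heqt : ‖y₀ - f t‖ = lam * ‖z - t‖ := (Finset.mem_filter.1 htI).2
          rw [hexp, heqt]
          nlinarith [hεpos, hηpos, sq_nonneg ε]
        have h0 : 0 ≤ lam * ‖z - t‖ := by positivity
        exact lt_of_pow_lt_pow_left₀ 2 h0 hsq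
      · -- inactive
        have hβt : ε * ‖d‖ < lam * ‖z - t‖ - ‖y₀ - f t‖ := by
          have := hεlt t ht
          simp only [hβ, if_neg htI] at this
          rw [lt_div_iff₀ hdpos] at this
          linarith
        calc ‖y₀ + ε • d - f t‖ ≤ ‖y₀ - f t‖ + ‖ε • d‖ := by
              have : y₀ + ε • d - f t = (y₀ - f t) + ε • d := by abel
              rw [this]; exact norm_add_le _ _
          _ = ‖y₀ - f t‖ + ε * ‖d‖ := by
              rw [norm_smul, Real.norm_eq_abs, abs_of_pos hεpos]
          _ < lam * ‖z - t‖ := by linarith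
    exact absurd (hy₀ (y₀ + ε • d)) (not_le.2 hgoal)
  -- final contradiction
  rw [mem_convexHull_iff_exists_fintype] at hmem
  obtain ⟨ι, hι, w, zz, hw0, hw1, hzI, hsum⟩ := hmem
  choose t htI2 hft using fun i => hzI i
  have htT : ∀ i, t i ∈ T := fun i => hIT _ (htI2 i)
  set a : ι → F := fun i => f (t i) - y₀ with ha
  set b : ι → E := fun i => t i - z with hb
  have hsum0 : ∑ i, w i • a i = (0:F) := by
    have h1 : ∑ i, w i • f (t i) = y₀ := by
      rw [← hsum]; exact Finset.sum_congr rfl fun i _ => by rw [hft i]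
    calc ∑ i, w i • a i = (∑ i, w i • f (t i)) - (∑ i, w i) • y₀ := by
          rw [Finset.sum_smul, ← Finset.sum_sub_distrib]
          exact Finset.sum_congr rfl fun i _ => by rw [smul_sub]
      _ = 0 := by rw [h1, hw1, one_smul, sub_self]
  have hinner0 : ∑ i, ∑ j, w i * (w j * ⟪a i, a j⟫) = 0 := by
    have h : ⟪∑ i, w i • a i, ∑ j, w j • a j⟫ = (0:ℝ) := by rw [hsum0, inner_zero_left]
    rw [← h]
    simp only [sum_inner, inner_sum, real_inner_smul_left, real_inner_smul_right]
    exact Finset.sum_congr rfl fun i _ => Finset.sum_congr rfl fun j _ => by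
      rw [real_inner_comm]
  set c : ℝ := (lam ^ 2 - 1) / 2 with hc
  have hcpos : 0 < c := by rw [hc]; nlinarith
  set B : ℝ := ∑ i, ∑ j, w i * (w j * ⟪b i, b j⟫) with hB
  set S : ℝ := ∑ i, ∑ j, w i * w j * ‖b i - b j‖ ^ 2 with hS
  have hBval : B = ⟪∑ i, w i • b i, ∑ j, w j • b j⟫ := by
    simp only [hB, sum_inner, inner_sum, real_inner_smul_left, real_inner_smul_right]
    exact Finset.sum_congr rfl fun i _ => Finset.sum_congr rfl fun j _ => by
      rw [real_inner_comm]
  have hSnn : (0:ℝ) ≤ S := by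
    apply Finset.sum_nonneg; intro i _
    apply Finset.sum_nonneg; intro j _
    have := hw0 i; have := hw0 j; positivity
  have hkey : ∀ i j : ι, lam ^ 2 * (w i * (w j * ⟪b i, b j⟫))
      + c * (w i * w j * ‖b i - b j‖ ^ 2) ≤ w i * (w j * ⟪a i, a j⟫) := by
    intro i j
    have h1 : ‖a i - a j‖ ≤ ‖b i - b j‖ := by
      have : a i - a j = f (t i) - f (t j) := by rw [ha]; beta_reduce; abel
      rw [this]
      have : b i - b j = t i - t j := by rw [hb]; beta_reduce; abel
      rw [this]
      exact hf _ (htT i) _ (htT j)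
    have h2 : ∀ i : ι, ‖a i‖ = lam * ‖b i‖ := by
      intro k
      have := (Finset.mem_filter.1 (htI2 k)).2
      rw [ha, hb]
      rw [norm_sub_rev (f (t k)) y₀, norm_sub_rev (t k) z]
      exact this
    have h3 : 2 * ⟪a i, a j⟫ = ‖a i‖ ^ 2 + ‖a j‖ ^ 2 - ‖a i - a j‖ ^ 2 := by
      have := @norm_sub_sq_real F _ _ (a i) (a j); linarith
    have h4 : 2 * ⟪b i, b j⟫ = ‖b i‖ ^ 2 + ‖b j‖ ^ 2 - ‖b i - b j‖ ^ 2 := by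
      have := @norm_sub_sq_real E _ _ (b i) (b j); linarith
    have hij : ⟪a i, a j⟫ ≥ lam ^ 2 * ⟪b i, b j⟫ + c * ‖b i - b j‖ ^ 2 := by
      have hsq : ‖a i - a j‖ ^ 2 ≤ ‖b i - b j‖ ^ 2 := by
        apply pow_le_pow_left₀ (norm_nonneg _) h1
      have he1 : ‖a i‖ ^ 2 = lam ^ 2 * ‖b i‖ ^ 2 := by rw [h2 i]; ring
      have he2 : ‖a j‖ ^ 2 = lam ^ 2 * ‖b j‖ ^ 2 := by rw [h2 j]; ring
      have h4' : lam ^ 2 * (2 * ⟪b i, b j⟫)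
          = lam ^ 2 * (‖b i‖ ^ 2 + ‖b j‖ ^ 2 - ‖b i - b j‖ ^ 2) := by rw [h4]
      rw [hc]; linarith
    have hwi := hw0 i; have hwj := hw0 j
    have h5 : (w i * w j) * (lam ^ 2 * ⟪b i, b j⟫ + c * ‖b i - b j‖ ^ 2)
        ≤ (w i * w j) * ⟪a i, a j⟫ :=
      mul_le_mul_of_nonneg_left hij (mul_nonneg hwi hwj)
    have e1 : lam ^ 2 * (w i * (w j * ⟪b i, b j⟫)) + c * (w i * w j * ‖b i - b j‖ ^ 2)
        = (w i * w j) * (lam ^ 2 * ⟪b i, b j⟫ + c * ‖b i - b j‖ ^ 2) := by ring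
    have e2 : w i * (w j * ⟪a i, a j⟫) = (w i * w j) * ⟪a i, a j⟫ := by ring
    rw [e1, e2]; exact h5
  have htotal : lam ^ 2 * B + c * S ≤ 0 := by
    rw [← hinner0, hB, hS]
    rw [Finset.mul_sum, Finset.mul_sum, ← Finset.sum_add_distrib]
    apply Finset.sum_le_sum
    intro i _
    rw [Finset.mul_sum, Finset.mul_sum, ← Finset.sum_add_distrib]
    exact Finset.sum_le_sum fun j _ => hkey i j
  -- pick a support index
  have hex : ∃ i : ι, w i ≠ 0 := by
    by_contra h; push_neg at h
    rw [Finset.sum_eq_zero (fun i _ => h i)] at hw1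
    exact zero_ne_one hw1
  obtain ⟨i₀, hi₀⟩ := hex
  have hi₀pos : 0 < w i₀ := (hw0 i₀).lt_of_ne (Ne.symm hi₀)
  have hSzero : S = 0 := by nlinarith [hBval ▸ real_inner_self_nonneg (x := ∑ i, w i • b i)]
  have hterm : ∀ i j : ι, w i * w j * ‖b i - b j‖ ^ 2 = 0 := by
    intro i j
    have h1 : ∀ k ∈ Finset.univ (α := ι), (0:ℝ) ≤ ∑ l, w k * w l * ‖b k - b l‖ ^ 2 :=
      fun k _ => Finset.sum_nonneg fun l _ => by
        have := hw0 k; have := hw0 l; positivity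
    have h2 := (Finset.sum_eq_zero_iff_of_nonneg h1).1 hSzero i (Finset.mem_univ i)
    have h3 : ∀ l ∈ Finset.univ (α := ι), (0:ℝ) ≤ w i * w l * ‖b i - b l‖ ^ 2 :=
      fun l _ => by have := hw0 i; have := hw0 l; positivity
    exact (Finset.sum_eq_zero_iff_of_nonneg h3).1 h2 j (Finset.mem_univ j)
  have hbeq : ∀ i, w i • b i = w i • b i₀ := by
    intro i
    rcases eq_or_ne (w i) 0 with h | h
    · rw [h, zero_smul, zero_smul]
    · have := hterm i₀ i
      have hw : 0 < w i₀ * w i := mul_pos hi₀pos ((hw0 i).lt_of_ne (Ne.symm h))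
      have : ‖b i₀ - b i‖ ^ 2 = 0 := by
        rcases mul_eq_zero.1 this with h' | h'
        · exact absurd h' hw.ne'
        · exact h'
      have : b i = b i₀ := by
        have := pow_eq_zero_iff (n := 2) (by norm_num) |>.1 this
        rw [norm_eq_zero, sub_eq_zero] at this
        exact this.symm
      rw [this]
  have hsumb : ∑ i, w i • b i = b i₀ := by
    rw [Finset.sum_congr rfl fun i _ => hbeq i, ← Finset.sum_smul, hw1, one_smul]
  have hbne : b i₀ ≠ 0 := by
    rw [hb, sub_ne_zero]
    intro h; rw [← h] at hzT; exact hzT (htT i₀)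
  have hBpos : 0 < B := by
    rw [hBval, hsumb, real_inner_self_eq_norm_sq]
    have : 0 < ‖b i₀‖ := norm_pos_iff.2 hbne
    positivity
  nlinarith [sq_nonneg lam]

theorem kirszbraun_onePoint (S : Set E) (f : E → F)
    (hf : ∀ s ∈ S, ∀ t ∈ S, ‖f s - f t‖ ≤ ‖s - t‖) (z : E) :
    ∃ y : F, ∀ s ∈ S, ‖y - f s‖ ≤ ‖z - s‖ := by
  classical
  rcases S.eq_empty_or_nonempty with rfl | ⟨s₀, hs₀⟩
  · exact ⟨0, by simp⟩
  set K : S → Set F := fun s => Metric.closedBall (f s) ‖z - (s : E)‖ with hK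
  have hKclosed : ∀ s : S, IsClosed (K s) := fun s => Metric.isClosed_closedBall
  have hKcompact : IsCompact (K ⟨s₀, hs₀⟩) := isCompact_closedBall _ _
  have hne : (K ⟨s₀, hs₀⟩ ∩ ⋂ s : S, K s).Nonempty := by
    apply hKcompact.inter_iInter_nonempty K hKclosed
    intro t
    -- finite subfamily
    set T : Finset E := insert s₀ (t.image (fun s : S => (s : E))) with hT
    have hTS : ∀ x ∈ T, x ∈ S := by
      intro x hx
      rw [hT, Finset.mem_insert] at hx
      rcases hx with rfl | hx
      · exact hs₀
      · obtain ⟨s, _, rfl⟩ := Finset.mem_image.1 hx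
        exact s.2
    obtain ⟨y, hy⟩ := kirszbraun_finset T f
      (fun a ha b hb => hf a (hTS a ha) b (hTS b hb)) z
    refine ⟨y, ?_, ?_⟩
    · exact Metric.mem_closedBall.2 (by
        rw [dist_eq_norm]
        exact hy s₀ (Finset.mem_insert_self _ _))
    · rw [Set.mem_iInter₂]
      intro s hs
      exact Metric.mem_closedBall.2 (by
        rw [dist_eq_norm]
        exact hy s (Finset.mem_insert_of_mem (Finset.mem_image_of_mem _ hs)))
  obtain ⟨y, _, hy2⟩ := hne
  refine ⟨y, fun s hs => ?_⟩
  have := Set.mem_iInter.1 hy2 ⟨s, hs⟩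
  rw [Metric.mem_closedBall, dist_eq_norm] at this
  exact this

theorem kirszbraun_extendFinset (S : Set E) (f : E → F)
    (hf : ∀ s ∈ S, ∀ t ∈ S, ‖f s - f t‖ ≤ ‖s - t‖) (P : Finset E) :
    ∃ h : E → F, (∀ s ∈ S, h s = f s) ∧
      (∀ x ∈ S ∪ (P : Set E), ∀ y ∈ S ∪ (P : Set E), ‖h x - h y‖ ≤ ‖x - y‖) := by
  classical
  induction P using Finset.induction with
  | empty => exact ⟨f, fun s _ => rfl, by simpa using hf⟩
  | @insert a P hnotmem ih =>
    obtain ⟨h, hh1, hh2⟩ := ih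
    by_cases haSP : a ∈ S ∪ (P : Set E)
    · refine ⟨h, hh1, ?_⟩
      have e : S ∪ ((insert a P : Finset E) : Set E) = S ∪ (P : Set E) := by
        rw [Finset.coe_insert, Set.union_insert, Set.insert_eq_of_mem haSP]
      rw [e]; exact hh2
    · obtain ⟨y, hy⟩ := kirszbraun_onePoint (S ∪ (P : Set E)) h hh2 a
      refine ⟨Function.update h a y, ?_, ?_⟩
      · intro s hs
        have hsa : s ≠ a := fun h' => haSP (h' ▸ Set.mem_union_left _ hs)
        rw [Function.update_of_ne hsa, hh1 s hs]
      · intro x hx y' hy'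
        rw [Finset.coe_insert, Set.union_insert, Set.mem_insert_iff] at hx hy'
        rcases hx with hxa | hx
        · rcases hy' with hya | hy'
          · rw [hxa, hya]; simp
          · have h1 : y' ≠ a := fun h' => haSP (h' ▸ hy')
            rw [hxa, Function.update_self, Function.update_of_ne h1]
            exact hy _ hy'
        · rcases hy' with hya | hy'
          · have h1 : x ≠ a := fun h' => haSP (h' ▸ hx)
            rw [hya, Function.update_self, Function.update_of_ne h1]
            rw [norm_sub_rev, norm_sub_rev x]
            exact hy _ hx
          · have h1 : x ≠ a := fun h' => haSP (h' ▸ hx)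
            have h2 : y' ≠ a := fun h' => haSP (h' ▸ hy')
            rw [Function.update_of_ne h1, Function.update_of_ne h2]
            exact hh2 _ hx _ hy'

theorem kirszbraun (S : Set E) (f : E → F)
    (hf : ∀ s ∈ S, ∀ t ∈ S, ‖f s - f t‖ ≤ ‖s - t‖) :
    ∃ g : E → F, (∀ x y : E, ‖g x - g y‖ ≤ ‖x - y‖) ∧ ∀ s ∈ S, g s = f s := by
  classical
  rcases S.eq_empty_or_nonempty with rfl | ⟨s₀, hs₀⟩
  · exact ⟨fun _ => 0, by simp, by simp⟩
  set Q : Set (E → F) := Set.pi Set.univ (fun x => Metric.closedBall (f s₀) ‖x - s₀‖) with hQ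
  have hQcomp : IsCompact Q := isCompact_univ_pi fun x => isCompact_closedBall _ _
  set Z : (E × E) ⊕ S → Set (E → F) := fun i =>
    Sum.elim (fun p : E × E => {g : E → F | ‖g p.1 - g p.2‖ ≤ ‖p.1 - p.2‖})
      (fun s : S => {g : E → F | g s = f s}) i with hZ
  have hZclosed : ∀ i, IsClosed (Z i) := by
    rintro (⟨x, y⟩ | s)
    · exact isClosed_le (((continuous_apply x).sub (continuous_apply y)).norm)
        continuous_const
    · exact isClosed_eq (continuous_apply (s : E)) continuous_const
  have hFIP : ∀ u : Finset ((E × E) ⊕ S), (Q ∩ ⋂ i ∈ u, Z i).Nonempty := by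
    intro u
    set P : Finset E :=
      (u.image fun i => Sum.elim Prod.fst (fun _ => s₀) i) ∪
      (u.image fun i => Sum.elim Prod.snd (fun _ => s₀) i) with hP
    obtain ⟨h, hh1, hh2⟩ := kirszbraun_extendFinset S f hf P
    set g : E → F := fun x => if x ∈ S ∪ (P : Set E) then h x else f s₀ with hg
    have hgball : ∀ x : E, g x ∈ Metric.closedBall (f s₀) ‖x - s₀‖ := by
      intro x
      rw [Metric.mem_closedBall, dist_eq_norm, hg]
      dsimp only
      by_cases hx : x ∈ S ∪ (P : Set E)
      · rw [if_pos hx, ← hh1 s₀ hs₀]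
        exact hh2 x hx s₀ (Set.mem_union_left _ hs₀)
      · rw [if_neg hx]; simp
    have hgS : ∀ s ∈ S, g s = f s := by
      intro s hs
      rw [hg]; dsimp only
      rw [if_pos (Set.mem_union_left _ hs)]
      exact hh1 s hs
    refine ⟨g, fun x _ => hgball x, ?_⟩
    rw [Set.mem_iInter₂]
    rintro (⟨x, y⟩ | s) hi
    · have hx : x ∈ (P : Set E) := by
        rw [hP]; push_cast
        exact Set.mem_union_left _ ⟨Sum.inl (x, y), by simpa using hi, rfl⟩
      have hy : y ∈ (P : Set E) := by
        rw [hP]; push_cast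
        exact Set.mem_union_right _ ⟨Sum.inl (x, y), by simpa using hi, rfl⟩
      have e1 : g x = h x := by rw [hg]; exact if_pos (Set.mem_union_right _ hx)
      have e2 : g y = h y := by rw [hg]; exact if_pos (Set.mem_union_right _ hy)
      show ‖g x - g y‖ ≤ ‖x - y‖
      rw [e1, e2]
      exact hh2 x (Set.mem_union_right _ hx) y (Set.mem_union_right _ hy)
    · exact hgS s s.2
  obtain ⟨g, hgQ, hgZ⟩ := hQcomp.inter_iInter_nonempty Z hZclosed hFIP
  rw [Set.mem_iInter] at hgZ
  refine ⟨g, fun x y => hgZ (Sum.inl (x, y)), fun s hs => hgZ (Sum.inr ⟨s, hs⟩)⟩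

theorem stmt_0 (n m : ℕ) (A B : Set (EuclideanSpace ℝ (Fin n))) (hAB : A ⊆ B)
    (u v : EuclideanSpace ℝ (Fin n) → EuclideanSpace ℝ (Fin m))
    (hu : ∀ x ∈ A, ∀ y ∈ A, ‖u x - u y‖ ≤ ‖x - y‖)
    (hv : ∀ x ∈ B, ∀ y ∈ B, ‖v x - v y‖ ≤ ‖x - y‖)
    (δ : ℝ) (hδ : 0 ≤ δ) (hclose : ∀ x ∈ A, ‖u x - v x‖ ≤ δ)
    (D : ℝ) (hD : 0 ≤ D) (hDbound : ∀ x ∈ A, ∀ y ∈ B, ‖v x - v y‖ ≤ D) :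
    ∃ uext : EuclideanSpace ℝ (Fin n) → EuclideanSpace ℝ (Fin m),
      (∀ x ∈ B, ∀ y ∈ B, ‖uext x - uext y‖ ≤ ‖x - y‖) ∧
      (∀ x ∈ A, uext x = u x) ∧
      (∀ x ∈ B, ‖v x - uext x‖ ≤ Real.sqrt (δ ^ 2 + 2 * δ * D)) := by
  classical
  have sqle : ∀ a b : ℝ, 0 ≤ a → 0 ≤ b → a ^ 2 ≤ b ^ 2 → a ≤ b := by
    intro a b ha hb h; nlinarith
  set t₀ : ℝ := Real.sqrt (δ ^ 2 + 2 * δ * D) with ht₀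
  have ht₀sq : t₀ ^ 2 = δ ^ 2 + 2 * δ * D := Real.sq_sqrt (by positivity)
  have ht₀nn : 0 ≤ t₀ := Real.sqrt_nonneg _
  set E' := WithLp 2 (EuclideanSpace ℝ (Fin n) × ℝ) with hE'
  set ev : EuclideanSpace ℝ (Fin n) → ℝ → E' :=
    fun x s => (WithLp.equiv 2 _).symm (x, s) with hev
  have hfst : ∀ (x : EuclideanSpace ℝ (Fin n)) (s : ℝ), (ev x s).fst = x := fun x s => rfl
  have hsnd : ∀ (x : EuclideanSpace ℝ (Fin n)) (s : ℝ), (ev x s).snd = s := fun x s => rfl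
  have hnorm : ∀ p q : E', ‖p - q‖ ^ 2 = ‖p.fst - q.fst‖ ^ 2 + (p.snd - q.snd) ^ 2 := by
    intro p q
    rw [WithLp.prod_norm_sq_eq_of_L2]
    rw [WithLp.sub_fst, WithLp.sub_snd, Real.norm_eq_abs, sq_abs]
  set SS : Set E' := {p | (p.fst ∈ A ∧ p.snd = 0) ∨ (p.fst ∈ B ∧ p.snd = t₀)} with hSS
  set w : E' → EuclideanSpace ℝ (Fin m) :=
    fun p => if p.fst ∈ A ∧ p.snd = 0 then u p.fst else v p.fst with hw
  have hfstle : ∀ p q : E', ‖p.fst - q.fst‖ ≤ ‖p - q‖ := by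
    intro p q
    apply sqle _ _ (norm_nonneg _) (norm_nonneg _)
    rw [hnorm]; nlinarith [sq_nonneg (p.snd - q.snd)]
  have hwlip : ∀ p ∈ SS, ∀ q ∈ SS, ‖w p - w q‖ ≤ ‖p - q‖ := by
    intro p hp q hq
    have key : ∀ p q : E', p ∈ SS → q ∈ SS → (p.fst ∈ A ∧ p.snd = 0) →
        ¬(q.fst ∈ A ∧ q.snd = 0) → ‖w p - w q‖ ≤ ‖p - q‖ := by
      intro p q hp hq hpA hqA
      have hqB : q.fst ∈ B ∧ q.snd = t₀ := hq.resolve_left hqA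
      rw [hw]; dsimp only
      rw [if_pos hpA, if_neg hqA]
      set M : ℝ := ‖v p.fst - v q.fst‖ with hM
      have h1 : ‖u p.fst - v q.fst‖ ≤ δ + M := by
        calc ‖u p.fst - v q.fst‖ ≤ ‖u p.fst - v p.fst‖ + ‖v p.fst - v q.fst‖ := by
              have : u p.fst - v q.fst = (u p.fst - v p.fst) + (v p.fst - v q.fst) := by abel
              rw [this]; exact norm_add_le _ _
          _ ≤ δ + M := by
              have := hclose p.fst hpA.1; rw [hM]; linarith
      have h2 : M ≤ ‖p.fst - q.fst‖ := hv p.fst (hAB hpA.1) q.fst hqB.1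
      have h3 : M ≤ D := hDbound p.fst hpA.1 q.fst hqB.1
      have hMnn : 0 ≤ M := norm_nonneg _
      apply sqle _ _ (norm_nonneg _) (norm_nonneg _)
      rw [hnorm, hpA.2, hqB.2]
      have hr : 0 ≤ ‖p.fst - q.fst‖ := norm_nonneg _
      have h4 : ‖u p.fst - v q.fst‖ ^ 2 ≤ (δ + M) ^ 2 := by
        nlinarith [norm_nonneg (u p.fst - v q.fst)]
      nlinarith [h4, ht₀sq, mul_le_mul_of_nonneg_left h3 hδ,
        mul_self_le_mul_self hMnn h2]
    by_cases hpA : p.fst ∈ A ∧ p.snd = 0 <;> by_cases hqA : q.fst ∈ A ∧ q.snd = 0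
    · rw [hw]; dsimp only; rw [if_pos hpA, if_pos hqA]
      exact (hu p.fst hpA.1 q.fst hqA.1).trans (hfstle p q)
    · exact key p q hp hq hpA hqA
    · rw [norm_sub_rev, norm_sub_rev p]
      exact key q p hq hp hqA hpA
    · have hpB := hp.resolve_left hpA
      have hqB := hq.resolve_left hqA
      rw [hw]; dsimp only; rw [if_neg hpA, if_neg hqA]
      exact (hv p.fst hpB.1 q.fst hqB.1).trans (hfstle p q)
  obtain ⟨g, hg1, hg2⟩ := kirszbraun SS w hwlip
  refine ⟨fun x => g (ev x 0), ?_, ?_, ?_⟩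
  · intro x hx y hy
    refine (hg1 (ev x 0) (ev y 0)).trans ?_
    apply le_of_eq
    apply le_antisymm <;>
      apply sqle _ _ (norm_nonneg _) (norm_nonneg _) <;>
      rw [hnorm, hfst, hfst, hsnd, hsnd] <;> simp
  · intro x hx
    show g (ev x 0) = u x
    have hmem : ev x 0 ∈ SS := Or.inl ⟨hx, rfl⟩
    rw [hg2 _ hmem, hw]; dsimp only
    rw [if_pos ⟨hx, rfl⟩, hfst]
  · intro x hx
    show ‖v x - g (ev x 0)‖ ≤ t₀
    have hmem : ev x t₀ ∈ SS := Or.inr ⟨hx, rfl⟩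
    have e1 : g (ev x t₀) = w (ev x t₀) := hg2 _ hmem
    have e2 : w (ev x t₀) = v x := by
      rw [hw]; dsimp only
      by_cases hc : (ev x t₀).fst ∈ A ∧ (ev x t₀).snd = 0
      · rw [if_pos hc]
        have ht0 : t₀ = 0 := hc.2
        have hδ0 : δ = 0 := by nlinarith [ht₀sq]
        have : ‖u x - v x‖ ≤ 0 := by
          have := hclose x hc.1; rw [hδ0] at this; exact this
        have : u x - v x = 0 := norm_le_zero_iff.1 this
        rw [sub_eq_zero] at this
        exact this
      · rw [if_neg hc, hfst]
    calc ‖v x - g (ev x 0)‖ = ‖g (ev x t₀) - g (ev x 0)‖ := by rw [e1, e2]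
      _ ≤ ‖ev x t₀ - ev x 0‖ := hg1 _ _
      _ ≤ t₀ := by
          apply sqle _ _ (norm_nonneg _) ht₀nn
          rw [hnorm, hfst, hfst, hsnd, hsnd]
          simp
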